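/- arXiv:2305.12489 — 3 statements merged into one kernel-verified Lean document; each statement's English description precedes it below -/
import Mathlib

section
/- Let α, σ > 0 and set p = α/(α+σ). On a probability space let ξ_1, ξ_2, … be i.i.d. random variables with the exponential distribution of rate α, and for each n let K_n be an ℕ-valued random variable independent of the sequence (ξ_i) such that K_n/n → p in probability (i.e. for every ε > 0, P[|K_n/n − p| > ε] → 0 as n → ∞). Define the largest inactivity period ψ_n := max_{1 ≤ i ≤ K_n} ξ_i (with ψ_n := 0 if K_n = 0). Then for every t ∈ ℝ, lim_{n→∞} P[α(ψ_n − ln(np)/α) ≤ t] = exp(−e^{-t}), i.e. α(ψ_n − ln(np)/α) converges in distribution to a standard Gumbel random variable. -/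
open MeasureTheory ProbabilityTheory Filter

section Aux

lemma aux_pow_tendsto (p c s : ℝ) (hp : 0 < p) (m : ℕ → ℕ)
    (hm : Tendsto (fun n : ℕ => (m n : ℝ) / n) atTop (nhds s)) :
    Tendsto (fun n : ℕ => (1 - c/((n:ℝ)*p)) ^ (m n)) atTop
      (nhds (Real.exp (-c*s/p))) := by
  have hnp : Tendsto (fun n : ℕ => (n:ℝ)*p) atTop atTop :=
    Tendsto.atTop_mul_const hp tendsto_natCast_atTop_atTop
  have h1 : Tendsto (fun n : ℕ => ((n:ℝ)*p) * Real.log (1 + (-c)/((n:ℝ)*p))) atTop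
      (nhds (-c)) := (Real.tendsto_mul_log_one_add_div_atTop (-c)).comp hnp
  have h2 : Tendsto (fun n : ℕ => ((m n : ℝ)/n) * (((n:ℝ)*p) * Real.log (1 + (-c)/((n:ℝ)*p))) / p)
      atTop (nhds (s * (-c) / p)) := (hm.mul h1).div_const p
  have h3 : Tendsto (fun n : ℕ => (m n : ℝ) * Real.log (1 - c/((n:ℝ)*p))) atTop
      (nhds (-c*s/p)) := by
    have : -c*s/p = s * (-c) / p := by ring
    rw [this]
    apply h2.congr'
    filter_upwards [eventually_ge_atTop 1] with n hn
    have hn0 : (n:ℝ) ≠ 0 := by positivity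
    have : (1 : ℝ) + (-c)/((n:ℝ)*p) = 1 - c/((n:ℝ)*p) := by ring
    rw [this]
    field_simp
  have h4 : Tendsto (fun n : ℕ => Real.exp ((m n : ℝ) * Real.log (1 - c/((n:ℝ)*p)))) atTop
      (nhds (Real.exp (-c*s/p))) := (Real.continuous_exp.tendsto _).comp h3
  apply h4.congr'
  have hsmall : Tendsto (fun n : ℕ => c/((n:ℝ)*p)) atTop (nhds 0) :=
    tendsto_const_nhds.div_atTop hnp
  have := hsmall.eventually (eventually_lt_nhds (show (0:ℝ) < 1 by norm_num))
  filter_upwards [this] with n hn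
  have hb : 0 < 1 - c/((n:ℝ)*p) := by linarith
  rw [← Real.log_pow, Real.exp_log (pow_pos hb _)]

lemma aux_ceil_ratio (s : ℝ) (hs : 0 ≤ s) :
    Tendsto (fun n : ℕ => ((⌈(n:ℝ)*s⌉₊ : ℝ)) / n) atTop (nhds s) := by
  apply tendsto_of_tendsto_of_tendsto_of_le_of_le' (g := fun _ : ℕ => s)
    (h := fun n : ℕ => s + 1/n) tendsto_const_nhds
  · simpa using tendsto_const_nhds.add (tendsto_one_div_atTop_nhds_zero_nat (𝕜 := ℝ))
  · filter_upwards [eventually_ge_atTop 1] with n hn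
    have hn0 : (0:ℝ) < n := by exact_mod_cast hn
    rw [le_div_iff₀ hn0, mul_comm]
    exact Nat.le_ceil _
  · filter_upwards [eventually_ge_atTop 1] with n hn
    have hn0 : (0:ℝ) < n := by exact_mod_cast hn
    rw [div_le_iff₀ hn0]
    have h1 := Nat.ceil_lt_add_one (by positivity : (0:ℝ) ≤ (n:ℝ)*s)
    have h2 : (s + 1/n) * n = (n:ℝ)*s + 1 := by field_simp
    linarith

lemma aux_floor_ratio (s : ℝ) (hs : 0 ≤ s) :
    Tendsto (fun n : ℕ => ((⌊(n:ℝ)*s⌋₊ : ℝ)) / n) atTop (nhds s) := by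
  apply tendsto_of_tendsto_of_tendsto_of_le_of_le' (g := fun n : ℕ => s - 1/n)
    (h := fun _ : ℕ => s)
  · simpa using tendsto_const_nhds.sub (tendsto_one_div_atTop_nhds_zero_nat (𝕜 := ℝ))
  · exact tendsto_const_nhds
  · filter_upwards [eventually_ge_atTop 1] with n hn
    have hn0 : (0:ℝ) < n := by exact_mod_cast hn
    rw [le_div_iff₀ hn0]
    have h1 := Nat.sub_one_lt_floor ((n:ℝ)*s)
    have h2 : (s - 1/n) * n = (n:ℝ)*s - 1 := by field_simp
    linarith
  · filter_upwards [eventually_ge_atTop 1] with n hn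
    have hn0 : (0:ℝ) < n := by exact_mod_cast hn
    rw [div_le_iff₀ hn0]
    have := Nat.floor_le (by positivity : (0:ℝ) ≤ (n:ℝ)*s)
    linarith [this, mul_comm s (n:ℝ)]

lemma aux_meas_preimage {Ω : Type*} [MeasurableSpace Ω] (P : Measure Ω)
    (f : Ω → ℕ) (hf : Measurable f) (T : Set ℕ) :
    P (f ⁻¹' T) = ∑' k, T.indicator (fun k => P (f ⁻¹' {k})) k := by
  have hU : f ⁻¹' T = ⋃ k, f ⁻¹' ({k} ∩ T) := by
    ext ω
    simp only [Set.mem_preimage, Set.mem_iUnion, Set.mem_inter_iff, Set.mem_singleton_iff]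
    exact ⟨fun h => ⟨f ω, rfl, h⟩, fun ⟨k, hk, h⟩ => hk ▸ h⟩
  rw [hU, measure_iUnion]
  · refine tsum_congr fun k => ?_
    by_cases hk : k ∈ T
    · rw [Set.indicator_of_mem hk, Set.inter_eq_left.2 (Set.singleton_subset_iff.2 hk)]
    · rw [Set.indicator_of_notMem hk,
        Set.singleton_inter_eq_empty.2 hk, Set.preimage_empty, measure_empty]
  · intro i j hij
    simp only [Function.onFun]
    refine Set.disjoint_left.2 fun ω hi hj => hij ?_
    simp only [Set.mem_preimage, Set.mem_inter_iff, Set.mem_singleton_iff] at hi hj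
    rw [← hi.1, ← hj.1]
  · exact fun k => hf (by trivial)

lemma aux_squeeze (p c : ℝ) (hp : 0 < p) (hc : 0 < c) (a : ℕ → ℕ → ℝ)
    (ha0 : ∀ n k, 0 ≤ a n k) (hsum : ∀ n, HasSum (a n) 1)
    (hconc : ∀ ε : ℝ, 0 < ε → Tendsto (fun n : ℕ =>
        ∑' k, Set.indicator {k : ℕ | ε < |(k:ℝ)/(n:ℝ) - p|} (a n) k) atTop (nhds 0)) :
    Tendsto (fun n : ℕ => ∑' k, a n k * (1 - c/((n:ℝ)*p))^k) atTop
      (nhds (Real.exp (-c))) := by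
  rw [Metric.tendsto_atTop]
  intro η hη
  set g : ℝ → ℝ := fun e => Real.exp (-c*(p+e)/p) with hg_def
  have hg0 : g 0 = Real.exp (-c) := by
    simp only [hg_def, add_zero]
    rw [mul_div_assoc, div_self hp.ne', mul_one]
  have hgc : Tendsto g (nhds 0) (nhds (Real.exp (-c))) := by
    rw [← hg0]
    exact (Real.continuous_exp.comp ((continuous_const.mul
      (continuous_const.add continuous_id)).div_const p)).tendsto 0
  have hgev : ∀ᶠ e : ℝ in nhds 0, dist (g e) (Real.exp (-c)) < η/3 :=
    Metric.tendsto_nhds.mp hgc (η/3) (by positivity)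
  obtain ⟨r, hr, H⟩ := Metric.eventually_nhds_iff.mp hgev
  set ε : ℝ := min (r/2) (p/2) with hε_def
  have hε0 : 0 < ε := lt_min (by positivity) (by positivity)
  have hεp : ε < p := lt_of_le_of_lt (min_le_right _ _) (by linarith)
  have hεr : ∀ e : ℝ, |e| ≤ ε → dist (g e) (Real.exp (-c)) < η/3 := by
    intro e he
    apply H
    rw [Real.dist_eq, sub_zero]
    have : ε < r := lt_of_le_of_lt (min_le_left _ _) (by linarith)
    linarith
  have Hlo := hεr (-ε) (by rw [abs_neg, abs_of_pos hε0])
  have Hhi := hεr ε (by rw [abs_of_pos hε0])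
  have hlo : Tendsto (fun n : ℕ => (1 - c/((n:ℝ)*p)) ^ (⌈(n:ℝ)*(p-ε)⌉₊)) atTop
      (nhds (g (-ε))) := by
    have : g (-ε) = Real.exp (-c*(p-ε)/p) := by simp [hg_def]; ring_nf
    rw [this]
    exact aux_pow_tendsto p c (p-ε) hp _ (aux_ceil_ratio (p-ε) (by linarith))
  have hhi : Tendsto (fun n : ℕ => (1 - c/((n:ℝ)*p)) ^ (⌊(n:ℝ)*(p+ε)⌋₊)) atTop
      (nhds (g ε)) :=
    aux_pow_tendsto p c (p+ε) hp _ (aux_floor_ratio (p+ε) (by linarith))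
  have hδ := hconc ε hε0
  have hnp : Tendsto (fun n : ℕ => (n:ℝ)*p) atTop atTop :=
    Tendsto.atTop_mul_const hp tendsto_natCast_atTop_atTop
  have hsmall : Tendsto (fun n : ℕ => c/((n:ℝ)*p)) atTop (nhds 0) :=
    tendsto_const_nhds.div_atTop hnp
  have hev1 := (Metric.tendsto_nhds.mp hlo (η/3) (by positivity))
  have hev2 := (Metric.tendsto_nhds.mp hhi (η/3) (by positivity))
  have hev3 := (Metric.tendsto_nhds.mp hδ (η/3) (by positivity))
  have hev4 := hsmall.eventually (eventually_lt_nhds (show (0:ℝ) < 1 by norm_num))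
  rw [← eventually_atTop]
  filter_upwards [hev1, hev2, hev3, hev4, eventually_ge_atTop 1] with n h1 h2 h3 h4 hn1
  set Q : ℝ := 1 - c/((n:ℝ)*p) with hQ_def
  have hn0 : (0:ℝ) < n := by exact_mod_cast hn1
  have hQ0 : 0 < Q := by rw [hQ_def]; linarith
  have hQ1 : Q ≤ 1 := by
    have : 0 ≤ c/((n:ℝ)*p) := by positivity
    rw [hQ_def]; linarith
  set B : Set ℕ := {k : ℕ | ε < |(k:ℝ)/(n:ℝ) - p|} with hB_def
  set D : ℝ := ∑' k, Set.indicator B (a n) k with hD_def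
  have hsa : Summable (a n) := (hsum n).summable
  have htsa : ∑' k, a n k = 1 := (hsum n).tsum_eq
  have hsaQ : Summable (fun k => a n k * Q^k) :=
    Summable.of_nonneg_of_le (fun k => mul_nonneg (ha0 n k) (pow_nonneg hQ0.le k))
      (fun k => mul_le_of_le_one_right (ha0 n k) (pow_le_one₀ hQ0.le hQ1)) hsa
  have hD0 : 0 ≤ D := tsum_nonneg fun k => Set.indicator_nonneg (fun k _ => ha0 n k) k
  have hDlt : D < η/3 := by
    have := h3; rw [Real.dist_eq, sub_zero] at this
    exact lt_of_le_of_lt (le_abs_self _) this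
  have hmem : ∀ k : ℕ, k ∉ B → (⌈(n:ℝ)*(p-ε)⌉₊ ≤ k ∧ k ≤ ⌊(n:ℝ)*(p+ε)⌋₊) := by
    intro k hk
    simp only [hB_def, Set.mem_setOf_eq, not_lt] at hk
    rw [abs_le] at hk
    constructor
    · refine Nat.ceil_le.2 ?_
      have : p - ε ≤ (k:ℝ)/n := by linarith [hk.1]
      calc (n:ℝ)*(p-ε) ≤ n * ((k:ℝ)/n) := by
            exact mul_le_mul_of_nonneg_left this hn0.le
        _ = k := by field_simp
    · refine Nat.le_floor ?_
      have : (k:ℝ)/n ≤ p + ε := by linarith [hk.2]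
      calc (k:ℝ) = n * ((k:ℝ)/n) := by field_simp
        _ ≤ n * (p+ε) := mul_le_mul_of_nonneg_left this hn0.le
        _ = (n:ℝ)*(p+ε) := rfl
  have hsplit : ∑' k, a n k * Q^k
      = (∑' k, Set.indicator B (fun k => a n k * Q^k) k)
      + (∑' k, Set.indicator Bᶜ (fun k => a n k * Q^k) k) := by
    rw [← Summable.tsum_add (hsaQ.indicator B) (hsaQ.indicator Bᶜ)]
    exact tsum_congr fun k => by
      rw [← Set.indicator_self_add_compl_apply B (fun k => a n k * Q^k) k]
  have hub1 : (∑' k, Set.indicator B (fun k => a n k * Q^k) k) ≤ D := by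
    refine Summable.tsum_le_tsum (fun k => ?_) (hsaQ.indicator B) (hsa.indicator B)
    by_cases hk : k ∈ B
    · rw [Set.indicator_of_mem hk, Set.indicator_of_mem hk]
      exact mul_le_of_le_one_right (ha0 n k) (pow_le_one₀ hQ0.le hQ1)
    · rw [Set.indicator_of_notMem hk, Set.indicator_of_notMem hk]
  have hub2 : (∑' k, Set.indicator Bᶜ (fun k => a n k * Q^k) k)
      ≤ Q ^ (⌈(n:ℝ)*(p-ε)⌉₊) := by
    have hpt : ∀ k, Set.indicator Bᶜ (fun k => a n k * Q^k) k
        ≤ a n k * Q ^ (⌈(n:ℝ)*(p-ε)⌉₊) := by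
      intro k
      by_cases hk : k ∈ Bᶜ
      · rw [Set.indicator_of_mem hk]
        exact mul_le_mul_of_nonneg_left
          (pow_le_pow_of_le_one hQ0.le hQ1 (hmem k hk).1) (ha0 n k)
      · rw [Set.indicator_of_notMem hk]
        exact mul_nonneg (ha0 n k) (pow_nonneg hQ0.le _)
    calc (∑' k, Set.indicator Bᶜ (fun k => a n k * Q^k) k)
        ≤ ∑' k, a n k * Q ^ (⌈(n:ℝ)*(p-ε)⌉₊) :=
          Summable.tsum_le_tsum hpt (hsaQ.indicator Bᶜ) (hsa.mul_right _)
      _ = (∑' k, a n k) * Q ^ (⌈(n:ℝ)*(p-ε)⌉₊) := tsum_mul_right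
      _ = Q ^ (⌈(n:ℝ)*(p-ε)⌉₊) := by rw [htsa, one_mul]
  have hcompl : (∑' k, Set.indicator Bᶜ (a n) k) = 1 - D := by
    have : D + (∑' k, Set.indicator Bᶜ (a n) k) = 1 := by
      rw [hD_def, ← Summable.tsum_add (hsa.indicator B) (hsa.indicator Bᶜ), ← htsa]
      exact tsum_congr fun k => by
        rw [← Set.indicator_self_add_compl_apply B (a n) k]
    linarith
  have hlb : Q ^ (⌊(n:ℝ)*(p+ε)⌋₊) - D ≤ ∑' k, a n k * Q^k := by
    have hpt : ∀ k, Set.indicator Bᶜ (a n) k * Q ^ (⌊(n:ℝ)*(p+ε)⌋₊)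
        ≤ Set.indicator Bᶜ (fun k => a n k * Q^k) k := by
      intro k
      by_cases hk : k ∈ Bᶜ
      · rw [Set.indicator_of_mem hk, Set.indicator_of_mem hk]
        exact mul_le_mul_of_nonneg_left
          (pow_le_pow_of_le_one hQ0.le hQ1 (hmem k hk).2) (ha0 n k)
      · rw [Set.indicator_of_notMem hk, Set.indicator_of_notMem hk, zero_mul]
    have h5 : (1 - D) * Q ^ (⌊(n:ℝ)*(p+ε)⌋₊)
        ≤ ∑' k, Set.indicator Bᶜ (fun k => a n k * Q^k) k := by
      rw [← hcompl, ← tsum_mul_right]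
      exact Summable.tsum_le_tsum hpt ((hsa.indicator Bᶜ).mul_right _) (hsaQ.indicator Bᶜ)
    have h6 : 0 ≤ ∑' k, Set.indicator B (fun k => a n k * Q^k) k :=
      tsum_nonneg fun k => Set.indicator_nonneg
        (fun k _ => mul_nonneg (ha0 n k) (pow_nonneg hQ0.le k)) k
    have h7 : Q ^ (⌊(n:ℝ)*(p+ε)⌋₊) ≤ 1 := pow_le_one₀ hQ0.le hQ1
    nlinarith [hsplit, h5, h6, h7, hD0]
  rw [Real.dist_eq, abs_lt]
  rw [Real.dist_eq, abs_lt] at h1 h2 Hlo Hhi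
  have hub : ∑' k, a n k * Q^k ≤ D + Q ^ (⌈(n:ℝ)*(p-ε)⌉₊) := by
    rw [hsplit]; linarith
  constructor
  · linarith [hlb, h2.1, Hhi.1, hDlt]
  · linarith [hub, h1.2, Hlo.2, hDlt]

end Aux

/-- The largest inactivity period: the maximum of the first `K n ω` of the dormancy periods
`ξ i ω`, taken to be `0` if `K n ω = 0`. -/
noncomputable def psi {Ω : Type*} (ξ : ℕ → Ω → ℝ) (K : ℕ → Ω → ℕ) (n : ℕ) (ω : Ω) : ℝ :=
  if h : (Finset.Icc 1 (K n ω)).Nonempty then (Finset.Icc 1 (K n ω)).sup' h fun i => ξ i ω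
  else 0

lemma aux_psi_cdf {Ω : Type*} [MeasurableSpace Ω] (P : Measure Ω) [IsProbabilityMeasure P]
    (α : ℝ) (hα : 0 < α) (ξ : ℕ → Ω → ℝ) (K : ℕ → Ω → ℕ)
    (hξmeas : ∀ i, Measurable (ξ i)) (hKmeas : ∀ n, Measurable (K n))
    (hξdist : ∀ i, ∀ x : ℝ, 0 ≤ x →
      P {ω | ξ i ω ≤ x} = ENNReal.ofReal (1 - Real.exp (-α * x)))
    (hξindep : iIndepFun ξ P)
    (hKindep : ∀ n, IndepFun (K n) (fun ω (i : ℕ) => ξ i ω) P)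
    (n : ℕ) (x : ℝ) (hx : 0 ≤ x) :
    P {ω | psi ξ K n ω ≤ x}
      = ∑' k, P (K n ⁻¹' {k}) * ENNReal.ofReal ((1 - Real.exp (-α * x))^k) := by
  have hq0 : 0 ≤ 1 - Real.exp (-α * x) := by
    have : Real.exp (-α * x) ≤ 1 := Real.exp_le_one_iff.2 (by nlinarith)
    linarith
  set E : ℕ → Set Ω := fun k => K n ⁻¹' {k} ∩ ⋂ i ∈ Finset.Icc 1 k, ξ i ⁻¹' Set.Iic x
    with hE_def
  have hEmeas : ∀ k, MeasurableSet (E k) := by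
    intro k
    exact (hKmeas n (measurableSet_singleton k)).inter
      (Finset.measurableSet_biInter _ fun i _ => hξmeas i measurableSet_Iic)
  have hSet : {ω | psi ξ K n ω ≤ x} = ⋃ k, E k := by
    ext ω
    simp only [hE_def, Set.mem_setOf_eq, Set.mem_iUnion, Set.mem_inter_iff, Set.mem_preimage,
      Set.mem_singleton_iff, Set.mem_iInter, Set.mem_Iic]
    constructor
    · intro h
      refine ⟨K n ω, rfl, fun i hi => ?_⟩
      unfold psi at h
      have hne : (Finset.Icc 1 (K n ω)).Nonempty := ⟨i, hi⟩
      rw [dif_pos hne] at h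
      exact (Finset.sup'_le_iff hne _).mp h i hi
    · rintro ⟨k, hk, hall⟩
      unfold psi
      by_cases hne : (Finset.Icc 1 (K n ω)).Nonempty
      · rw [dif_pos hne]
        refine (Finset.sup'_le_iff hne _).mpr fun i hi => hall i (hk ▸ hi)
      · rw [dif_neg hne]; exact hx
  have hdisj : Pairwise (Function.onFun Disjoint E) := by
    intro i j hij
    simp only [Function.onFun, hE_def]
    refine Set.disjoint_left.2 fun ω hi hj => hij ?_
    have h1 : K n ω = i := hi.1
    have h2 : K n ω = j := hj.1
    rw [← h1, ← h2]
  rw [hSet, measure_iUnion hdisj hEmeas]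
  refine tsum_congr fun k => ?_
  have hSmeas : MeasurableSet {f : ℕ → ℝ | ∀ i ∈ Finset.Icc 1 k, f i ≤ x} := by
    have : {f : ℕ → ℝ | ∀ i ∈ Finset.Icc 1 k, f i ≤ x}
        = ⋂ i ∈ Finset.Icc 1 k, (fun f : ℕ → ℝ => f i) ⁻¹' Set.Iic x := by
      ext f; simp
    rw [this]
    exact Finset.measurableSet_biInter _ fun i _ => measurable_pi_apply i measurableSet_Iic
  have hEeq : E k = K n ⁻¹' {k}
      ∩ (fun ω (i : ℕ) => ξ i ω) ⁻¹' {f : ℕ → ℝ | ∀ i ∈ Finset.Icc 1 k, f i ≤ x} := by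
    simp only [hE_def]
    congr 1
    ext ω; simp
  have hmul := (hKindep n).measure_inter_preimage_eq_mul {k}
    {f : ℕ → ℝ | ∀ i ∈ Finset.Icc 1 k, f i ≤ x} (measurableSet_singleton k) hSmeas
  rw [hEeq, hmul]
  congr 1
  have hpre : (fun ω (i : ℕ) => ξ i ω) ⁻¹' {f : ℕ → ℝ | ∀ i ∈ Finset.Icc 1 k, f i ≤ x}
      = ⋂ i ∈ Finset.Icc 1 k, ξ i ⁻¹' Set.Iic x := by
    ext ω; simp
  rw [hpre, hξindep.measure_inter_preimage_eq_mul (Finset.Icc 1 k)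
    (sets := fun _ => Set.Iic x) (fun i _ => measurableSet_Iic)]
  have hone : ∀ i, P (ξ i ⁻¹' Set.Iic x) = ENNReal.ofReal (1 - Real.exp (-α * x)) := by
    intro i
    have : ξ i ⁻¹' Set.Iic x = {ω | ξ i ω ≤ x} := by ext ω; simp
    rw [this]; exact hξdist i x hx
  rw [Finset.prod_congr rfl fun i _ => hone i, Finset.prod_const, Nat.card_Icc,
    Nat.add_sub_cancel, ← ENNReal.ofReal_pow hq0]

/-- Gumbel limit of the largest inactivity period: if `ξ i` are i.i.d. exponential(`α`),
`K n` is independent of the sequence `(ξ i)` with `K n / n → p = α/(α+σ)` in probability,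
and `ψ_n = max_{1 ≤ i ≤ K n} ξ i`, then `α(ψ_n - ln(np)/α)` converges in distribution to a
standard Gumbel random variable. -/
theorem largest_inactivity_gumbel
    {Ω : Type*} [MeasurableSpace Ω] (P : Measure Ω) [IsProbabilityMeasure P]
    (α σ : ℝ) (hα : 0 < α) (hσ : 0 < σ) (p : ℝ) (hp : p = α / (α + σ))
    (ξ : ℕ → Ω → ℝ) (K : ℕ → Ω → ℕ)
    (hξmeas : ∀ i, Measurable (ξ i)) (hKmeas : ∀ n, Measurable (K n))
    (hξdist : ∀ i, ∀ x : ℝ, 0 ≤ x →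
      P {ω | ξ i ω ≤ x} = ENNReal.ofReal (1 - Real.exp (-α * x)))
    (hξindep : iIndepFun ξ P)
    (hKindep : ∀ n, IndepFun (K n) (fun ω (i : ℕ) => ξ i ω) P)
    (hKp : ∀ ε : ℝ, 0 < ε →
      Tendsto (fun n : ℕ => (P {ω | ε < |(K n ω : ℝ) / (n : ℝ) - p|}).toReal)
        atTop (nhds 0)) :
    ∀ t : ℝ,
      Tendsto (fun n : ℕ =>
          (P {ω | α * (psi ξ K n ω - Real.log ((n : ℝ) * p) / α) ≤ t}).toReal)
        atTop (nhds (Real.exp (-Real.exp (-t)))) := by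
  intro t
  have hp0 : 0 < p := by rw [hp]; exact div_pos hα (by linarith)
  set c : ℝ := Real.exp (-t) with hc_def
  have hc : 0 < c := Real.exp_pos _
  set a : ℕ → ℕ → ℝ := fun n k => (P (K n ⁻¹' {k})).toReal with ha_def
  have ha0 : ∀ n k, 0 ≤ a n k := fun n k => ENNReal.toReal_nonneg
  have htsum1 : ∀ n, ∑' k, P (K n ⁻¹' {k}) = 1 := by
    intro n
    have := aux_meas_preimage P (K n) (hKmeas n) Set.univ
    simpa using this.symm
  have hsum : ∀ n, HasSum (a n) 1 := by
    intro n
    have hne : ∑' k, P (K n ⁻¹' {k}) ≠ ⊤ := by rw [htsum1 n]; exact ENNReal.one_ne_top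
    have hsa : Summable (a n) := ENNReal.summable_toReal hne
    refine hsa.hasSum_iff.2 ?_
    rw [ha_def]
    rw [← ENNReal.tsum_toReal_eq (fun k => measure_ne_top P _), htsum1 n, ENNReal.toReal_one]
  have hconc : ∀ ε : ℝ, 0 < ε → Tendsto (fun n : ℕ =>
      ∑' k, Set.indicator {k : ℕ | ε < |(k:ℝ)/(n:ℝ) - p|} (a n) k) atTop (nhds 0) := by
    intro ε hε
    refine (hKp ε hε).congr fun n => ?_
    have hpre : {ω | ε < |(K n ω : ℝ)/(n:ℝ) - p|}
        = K n ⁻¹' {k : ℕ | ε < |(k:ℝ)/(n:ℝ) - p|} := rfl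
    rw [hpre, aux_meas_preimage P (K n) (hKmeas n),
      ENNReal.tsum_toReal_eq (fun k => ?_)]
    · refine tsum_congr fun k => ?_
      by_cases hk : k ∈ {k : ℕ | ε < |(k:ℝ)/(n:ℝ) - p|}
      · rw [Set.indicator_of_mem hk, Set.indicator_of_mem hk]
      · rw [Set.indicator_of_notMem hk, Set.indicator_of_notMem hk, ENNReal.toReal_zero]
    · by_cases hk : k ∈ {k : ℕ | ε < |(k:ℝ)/(n:ℝ) - p|}
      · rw [Set.indicator_of_mem hk]; exact measure_ne_top P _
      · rw [Set.indicator_of_notMem hk]; exact ENNReal.zero_ne_top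
  have key := aux_squeeze p c hp0 hc a ha0 hsum hconc
  refine key.congr' ?_
  have hnp : Tendsto (fun n : ℕ => (n:ℝ)*p) atTop atTop :=
    Tendsto.atTop_mul_const hp0 tendsto_natCast_atTop_atTop
  have hlog : Tendsto (fun n : ℕ => Real.log ((n:ℝ)*p)) atTop atTop :=
    Real.tendsto_log_atTop.comp hnp
  filter_upwards [hlog.eventually_ge_atTop (-t), eventually_ge_atTop 1] with n hln hn1
  have hn0 : (0:ℝ) < n := by exact_mod_cast hn1
  have hnp0 : 0 < (n:ℝ)*p := mul_pos hn0 hp0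
  set L : ℝ := Real.log ((n:ℝ)*p) with hL_def
  set x : ℝ := (t + L)/α with hx_def
  have hx : 0 ≤ x := div_nonneg (by linarith) hα.le
  have hq : 1 - Real.exp (-α * x) = 1 - c/((n:ℝ)*p) := by
    congr 1
    have hαx : -α * x = -t + -L := by
      rw [hx_def]; field_simp; ring
    rw [hαx, Real.exp_add,
      show Real.exp (-L) = ((n:ℝ)*p)⁻¹ by rw [Real.exp_neg, hL_def, Real.exp_log hnp0],
      hc_def, div_eq_mul_inv]
  have hevent : {ω | α * (psi ξ K n ω - L/α) ≤ t} = {ω | psi ξ K n ω ≤ x} := by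
    ext ω
    simp only [Set.mem_setOf_eq]
    rw [mul_sub, mul_div_cancel₀ _ hα.ne', sub_le_iff_le_add, hx_def, le_div_iff₀ hα,
      mul_comm]
  rw [hevent, aux_psi_cdf P α hα ξ K hξmeas hKmeas hξdist hξindep hKindep n x hx, hq,
    ENNReal.tsum_toReal_eq (fun k => ENNReal.mul_ne_top (measure_ne_top P _)
      ENNReal.ofReal_ne_top)]
  have hQ0 : 0 ≤ 1 - c/((n:ℝ)*p) := by
    rw [← hq]
    have : Real.exp (-α * x) ≤ 1 := Real.exp_le_one_iff.2 (by nlinarith)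
    linarith
  refine tsum_congr fun k => ?_
  rw [ENNReal.toReal_mul, ENNReal.toReal_ofReal (pow_nonneg hQ0 k)]
end

section
/- Let α, σ > 0 and set p = α/(α+σ). On a probability space let ξ_1, ξ_2, … be i.i.d. random variables with the exponential distribution of rate α, and for each n let K_n be an ℕ-valued random variable independent of the sequence (ξ_i) such that K_n/n → p in probability. Define ψ_n := max_{1 ≤ i ≤ K_n} ξ_i (with ψ_n := 0 if K_n = 0). Then for every r with 0 < r < 1/α, lim_{n→∞} P[ψ_n ≤ r·ln(np)] = 0. -/
open MeasureTheory ProbabilityTheory Filter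

/-- Sub-critical estimate for the largest inactivity period: for `0 < r < 1/α`,
`P[ψ_n ≤ r ln(np)] → 0`. -/
theorem largest_inactivity_subcritical
    {Ω : Type*} [MeasurableSpace Ω] (P : Measure Ω) [IsProbabilityMeasure P]
    (α σ : ℝ) (hα : 0 < α) (hσ : 0 < σ) (p : ℝ) (hp : p = α / (α + σ))
    (ξ : ℕ → Ω → ℝ) (K : ℕ → Ω → ℕ)
    (hξmeas : ∀ i, Measurable (ξ i)) (hKmeas : ∀ n, Measurable (K n))
    (hξdist : ∀ i, ∀ x : ℝ, 0 ≤ x →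
      P {ω | ξ i ω ≤ x} = ENNReal.ofReal (1 - Real.exp (-α * x)))
    (hξindep : iIndepFun ξ P)
    (hKindep : ∀ n, IndepFun (K n) (fun ω (i : ℕ) => ξ i ω) P)
    (hKp : ∀ ε : ℝ, 0 < ε →
      Tendsto (fun n : ℕ => (P {ω | ε < |(K n ω : ℝ) / (n : ℝ) - p|}).toReal)
        atTop (nhds 0)) :
    ∀ r : ℝ, 0 < r → r < 1 / α →
      Tendsto (fun n : ℕ =>
          (P {ω | psi ξ K n ω ≤ r * Real.log ((n : ℝ) * p)}).toReal)
        atTop (nhds 0) := by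
  intro r hr0 hr1
  have hp0 : 0 < p := by rw [hp]; positivity
  have hβ : α * r < 1 := by
    have h := (lt_div_iff₀ hα).mp hr1
    linarith [mul_comm r α]
  set L : ℕ → ℝ := fun n => Real.log ((n : ℝ) * p) with hLdef
  set x : ℕ → ℝ := fun n => r * L n with hxdef
  set m : ℕ → ℕ := fun n => ⌈(n : ℝ) * p / 2⌉₊ with hmdef
  set q : ℕ → ℝ := fun n => Real.exp (-α * x n) with hqdef
  have hnp : Tendsto (fun n : ℕ => (n : ℝ) * p) atTop atTop :=
    Tendsto.atTop_mul_const hp0 tendsto_natCast_atTop_atTop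
  have hLtop : Tendsto L atTop atTop := Real.tendsto_log_atTop.comp hnp
  -- q n * m n → ∞
  have hqm : Tendsto (fun n => q n * (m n : ℝ)) atTop atTop := by
    have h1 : Tendsto (fun n => Real.exp ((1 - α * r) * L n) / 2) atTop atTop := by
      refine Tendsto.atTop_div_const (by norm_num) ?_
      exact Real.tendsto_exp_atTop.comp (hLtop.const_mul_atTop (by linarith))
    refine tendsto_atTop_mono' atTop ?_ h1
    filter_upwards [hnp.eventually_ge_atTop 1] with n hn
    have hnp0 : (0 : ℝ) < (n : ℝ) * p := by linarith
    have hm : (n : ℝ) * p / 2 ≤ (m n : ℝ) := Nat.le_ceil _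
    have hq0 : 0 < q n := Real.exp_pos _
    have : q n * ((n : ℝ) * p / 2) ≤ q n * (m n : ℝ) :=
      mul_le_mul_of_nonneg_left hm hq0.le
    have hexp : (n : ℝ) * p = Real.exp (L n) := (Real.exp_log hnp0).symm
    have heq : q n * ((n : ℝ) * p / 2) = Real.exp ((1 - α * r) * L n) / 2 := by
      rw [hexp]
      simp only [hqdef, hxdef]
      rw [← mul_div_assoc, ← Real.exp_add]
      congr 2
      ring
    exact le_trans (le_of_eq heq.symm) this
  -- the exponential bound term tends to 0
  have hg : Tendsto (fun n => Real.exp (-(q n * (m n : ℝ)))) atTop (nhds 0) :=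
    Real.tendsto_exp_atBot.comp (tendsto_neg_atTop_atBot.comp hqm)
  -- first term tends to 0
  have hA := hKp (p / 4) (by positivity)
  -- squeeze
  have hsum : Tendsto (fun n => (P {ω | p / 4 < |(K n ω : ℝ) / (n : ℝ) - p|}).toReal
      + Real.exp (-(q n * (m n : ℝ)))) atTop (nhds 0) := by
    simpa using hA.add hg
  refine squeeze_zero' ?_ ?_ hsum
  · filter_upwards with n; exact ENNReal.toReal_nonneg
  · filter_upwards [hnp.eventually_ge_atTop 1] with n hn
    have hnp1 : (1 : ℝ) ≤ (n : ℝ) * p := hn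
    have hnp0 : (0 : ℝ) < (n : ℝ) * p := by linarith
    have hn0 : (0 : ℝ) < (n : ℝ) := by nlinarith
    have hL0 : 0 ≤ L n := Real.log_nonneg hnp1
    have hx0 : 0 ≤ x n := mul_nonneg hr0.le hL0
    have hm1 : 1 ≤ m n := Nat.ceil_pos.mpr (by linarith : (0 : ℝ) < (n : ℝ) * p / 2)
    set A : Set Ω := {ω | p / 4 < |(K n ω : ℝ) / (n : ℝ) - p|} with hAdef
    set B : Set Ω := ⋂ i ∈ Finset.Icc 1 (m n), {ω | ξ i ω ≤ x n} with hBdef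
    have hsub : {ω | psi ξ K n ω ≤ x n} ⊆ A ∪ B := by
      intro ω hω
      by_cases hK : (K n ω : ℝ) < (n : ℝ) * p / 2
      · left
        have hdiv : (K n ω : ℝ) / (n : ℝ) < p / 2 := by
          rw [div_lt_iff₀ hn0]; linarith
        have : p / 2 < p - (K n ω : ℝ) / (n : ℝ) := by
          have h0 : 0 ≤ (K n ω : ℝ) / (n : ℝ) := by positivity
          linarith
        have habs : p - (K n ω : ℝ) / (n : ℝ) ≤ |(K n ω : ℝ) / (n : ℝ) - p| := by
          rw [abs_sub_comm]; exact le_abs_self _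
        simp only [hAdef, Set.mem_setOf_eq]
        linarith
      · right
        push_neg at hK
        have hmK : m n ≤ K n ω := Nat.ceil_le.mpr hK
        have hne : (Finset.Icc 1 (K n ω)).Nonempty :=
          Finset.nonempty_Icc.mpr (le_trans hm1 hmK)
        have hpsi : psi ξ K n ω = (Finset.Icc 1 (K n ω)).sup' hne fun i => ξ i ω := by
          simp only [psi, dif_pos hne]
        simp only [hBdef, Set.mem_iInter, Set.mem_setOf_eq]
        intro i hi
        rw [Finset.mem_Icc] at hi
        have hiK : i ∈ Finset.Icc 1 (K n ω) :=
          Finset.mem_Icc.mpr ⟨hi.1, le_trans hi.2 hmK⟩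
        calc ξ i ω ≤ (Finset.Icc 1 (K n ω)).sup' hne fun i => ξ i ω :=
              Finset.le_sup' (f := fun i => ξ i ω) hiK
          _ = psi ξ K n ω := hpsi.symm
          _ ≤ x n := hω
    have hBmeas : P B = ENNReal.ofReal (1 - q n) ^ m n := by
      have := hξindep.meas_biInter (S := Finset.Icc 1 (m n))
        (s := fun i => {ω | ξ i ω ≤ x n})
        (fun i _ => ⟨Set.Iic (x n), measurableSet_Iic, rfl⟩)
      rw [hBdef, this]
      have hdist : ∀ i ∈ Finset.Icc 1 (m n),
          P {ω | ξ i ω ≤ x n} = ENNReal.ofReal (1 - q n) := fun i _ => hξdist i (x n) hx0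
      rw [Finset.prod_congr rfl hdist, Finset.prod_const, Nat.card_Icc]
      norm_num
    have hq1 : q n ≤ 1 := by
      rw [hqdef]
      exact Real.exp_le_one_iff.mpr (by nlinarith)
    have hc0 : 0 ≤ 1 - q n := by linarith
    have key : (P {ω | psi ξ K n ω ≤ x n}).toReal ≤ (P A).toReal + (1 - q n) ^ m n := by
      have h1 : P {ω | psi ξ K n ω ≤ x n} ≤ P A + P B :=
        le_trans (measure_mono hsub) (measure_union_le A B)
      have h2 : (P A + P B).toReal = (P A).toReal + (1 - q n) ^ m n := by
        rw [ENNReal.toReal_add (measure_ne_top P A) (measure_ne_top P B), hBmeas,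
          ENNReal.toReal_pow, ENNReal.toReal_ofReal hc0]
      calc (P {ω | psi ξ K n ω ≤ x n}).toReal
          ≤ (P A + P B).toReal := ENNReal.toReal_mono (by finiteness) h1
        _ = (P A).toReal + (1 - q n) ^ m n := h2
    have hpow : (1 - q n) ^ m n ≤ Real.exp (-(q n * (m n : ℝ))) := by
      have h1 : 1 - q n ≤ Real.exp (-q n) := by
        have := Real.add_one_le_exp (-q n)
        linarith
      calc (1 - q n) ^ m n ≤ Real.exp (-q n) ^ m n := pow_le_pow_left₀ hc0 h1 _
        _ = Real.exp (-(q n * (m n : ℝ))) := by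
            rw [← Real.exp_nat_mul]; ring_nf
    exact le_trans key (by linarith)
end

section
/- Let α, σ > 0 and set p = α/(α+σ). On a probability space let ξ_1, ξ_2, … be i.i.d. random variables with the exponential distribution of rate α, and for each n let K_n be an ℕ-valued random variable independent of the sequence (ξ_i) such that K_n/n → p in probability and such that almost surely K_n ≤ K_{n+1} for all n. Define ψ_n := max_{1 ≤ i ≤ K_n} ξ_i (with ψ_n := 0 if K_n = 0). Then ψ_n → ∞ almost surely as n → ∞. -/
open MeasureTheory ProbabilityTheory Filter

/-- For each real `M ≥ 0`, almost surely there is `i ≥ 1` with `ξ i ω > M`. -/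
lemma exists_large_xi
    {Ω : Type*} [MeasurableSpace Ω] (P : Measure Ω) [IsProbabilityMeasure P]
    (α : ℝ) (hα : 0 < α)
    (ξ : ℕ → Ω → ℝ)
    (hξmeas : ∀ i, Measurable (ξ i))
    (hξdist : ∀ i, ∀ x : ℝ, 0 ≤ x →
      P {ω | ξ i ω ≤ x} = ENNReal.ofReal (1 - Real.exp (-α * x)))
    (hξindep : iIndepFun ξ P) (M : ℝ) (hM : 0 ≤ M) :
    ∀ᵐ ω ∂P, ∃ i : ℕ, 1 ≤ i ∧ M < ξ i ω := by
  set s : ℕ → Set Ω := fun i => ξ i ⁻¹' Set.Ioi M with hs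
  have hsm : ∀ i, MeasurableSet (s i) := fun i => (hξmeas i) measurableSet_Ioi
  -- probability of each event
  have hmeasval : ∀ i, P (s i) = ENNReal.ofReal (Real.exp (-α * M)) := by
    intro i
    have hcompl : s i = {ω | ξ i ω ≤ M}ᶜ := by
      ext ω; simp [hs, Set.mem_preimage, not_le]
    have hmeasle : MeasurableSet {ω | ξ i ω ≤ M} := (hξmeas i) measurableSet_Iic
    rw [hcompl, measure_compl hmeasle (measure_ne_top _ _), measure_univ, hξdist i M hM]
    have he1 : Real.exp (-α * M) ≤ 1 := by
      apply Real.exp_le_one_iff.mpr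
      nlinarith
    have he0 : 0 < Real.exp (-α * M) := Real.exp_pos _
    rw [show (1 : ENNReal) = ENNReal.ofReal 1 by simp, ← ENNReal.ofReal_sub _ (by linarith)]
    ring_nf
  have hsum : (∑' i, P (s i)) = ⊤ := by
    simp only [hmeasval]
    exact ENNReal.tsum_const_eq_top_of_ne_zero
      (by simp [ENNReal.ofReal_eq_zero, not_le, Real.exp_pos])
  have hindepset : iIndepSet s P := by
    rw [ProbabilityTheory.iIndepSet_iff_meas_biInter hsm]
    intro t
    exact hξindep.measure_inter_preimage_eq_mul t (fun i _ => measurableSet_Ioi)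
  have hlimsup := ProbabilityTheory.measure_limsup_eq_one hsm hindepset hsum
  have : ∀ᵐ ω ∂P, ω ∈ limsup s atTop := by
    rw [ae_iff]
    have hc : {ω | ¬ ω ∈ limsup s atTop} = (limsup s atTop)ᶜ := rfl
    rw [hc, measure_compl (MeasurableSet.measurableSet_limsup hsm) (measure_ne_top _ _),
      measure_univ, hlimsup]
    simp
  filter_upwards [this] with ω hω
  rw [Filter.mem_limsup_iff_frequently_mem] at hω
  obtain ⟨i, hi1, hi2⟩ := (hω.and_eventually (eventually_ge_atTop 1)).exists
  exact ⟨i, hi2, hi1⟩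

/-- Almost-sure divergence of the largest inactivity periods: if moreover `K n` is almost
surely nondecreasing in `n`, then `ψ_n → ∞` almost surely. -/
theorem largest_inactivity_diverges
    {Ω : Type*} [MeasurableSpace Ω] (P : Measure Ω) [IsProbabilityMeasure P]
    (α σ : ℝ) (hα : 0 < α) (hσ : 0 < σ) (p : ℝ) (hp : p = α / (α + σ))
    (ξ : ℕ → Ω → ℝ) (K : ℕ → Ω → ℕ)
    (hξmeas : ∀ i, Measurable (ξ i)) (hKmeas : ∀ n, Measurable (K n))
    (hξdist : ∀ i, ∀ x : ℝ, 0 ≤ x →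
      P {ω | ξ i ω ≤ x} = ENNReal.ofReal (1 - Real.exp (-α * x)))
    (hξindep : iIndepFun ξ P)
    (hKindep : ∀ n, IndepFun (K n) (fun ω (i : ℕ) => ξ i ω) P)
    (hKp : ∀ ε : ℝ, 0 < ε →
      Tendsto (fun n : ℕ => (P {ω | ε < |(K n ω : ℝ) / (n : ℝ) - p|}).toReal)
        atTop (nhds 0))
    (hKmono : ∀ᵐ ω ∂P, ∀ n : ℕ, K n ω ≤ K (n + 1) ω) :
    ∀ᵐ ω ∂P, Tendsto (fun n : ℕ => psi ξ K n ω) atTop atTop := by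
  have hppos : 0 < p := by rw [hp]; positivity
  -- Step 1: a.s. for every natural M there is i ≥ 1 with ξ i ω > M
  have hxi : ∀ᵐ ω ∂P, ∀ M : ℕ, ∃ i : ℕ, 1 ≤ i ∧ (M : ℝ) < ξ i ω := by
    rw [ae_all_iff]
    intro M
    exact exists_large_xi P α hα ξ hξmeas hξdist hξindep M (Nat.cast_nonneg M)
  -- Step 2: a.s. K is unbounded
  have hKunbdd : ∀ᵐ ω ∂P, ∀ m : ℕ, ∃ n : ℕ, m ≤ K n ω := by
    rw [ae_all_iff]
    intro m
    rw [ae_iff]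
    have hbad : ∀ n : ℕ, {ω | ¬ ∃ n, m ≤ K n ω} ⊆ {ω | K n ω < m} := by
      intro n ω hω
      simp only [Set.mem_setOf_eq, not_exists, not_le] at hω ⊢
      exact hω n
    have hsub : ∀ᶠ n : ℕ in atTop,
        (P {ω | K n ω < m}).toReal ≤ (P {ω | p/2 < |(K n ω : ℝ) / (n : ℝ) - p|}).toReal := by
      filter_upwards [eventually_ge_atTop (Nat.ceil ((2 * m : ℝ) / p) + 1)] with n hn
      apply ENNReal.toReal_mono (measure_ne_top _ _)
      apply measure_mono
      intro ω hω
      simp only [Set.mem_setOf_eq] at hω ⊢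
      have hn0 : 0 < (n : ℝ) := by
        have : 1 ≤ n := le_trans (Nat.le_add_left 1 _) hn
        exact_mod_cast this
      have hnm : (2 * m : ℝ) / p ≤ n := by
        calc (2 * m : ℝ) / p ≤ Nat.ceil ((2 * m : ℝ) / p) := Nat.le_ceil _
          _ ≤ n := by exact_mod_cast le_trans (Nat.le_add_right _ 1) hn
      have hKlt : (K n ω : ℝ) < m := by exact_mod_cast hω
      have h1 : (K n ω : ℝ) / n < p / 2 := by
        rw [div_lt_iff₀ hn0]
        have h2m : (2 * m : ℝ) ≤ p * n := by
          rw [div_le_iff₀ hppos] at hnm; linarith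
        nlinarith
      calc p/2 < -((K n ω : ℝ)/n - p) := by linarith
        _ ≤ |(K n ω : ℝ)/n - p| := neg_le_abs _
    have hzero : Tendsto (fun n : ℕ => (P {ω | K n ω < m}).toReal) atTop (nhds 0) :=
      squeeze_zero' (Eventually.of_forall fun n => ENNReal.toReal_nonneg) hsub
        (hKp (p/2) (by positivity))
    have hle : ∀ n : ℕ, (P {ω | ¬ ∃ n, m ≤ K n ω}).toReal ≤ (P {ω | K n ω < m}).toReal :=
      fun n => ENNReal.toReal_mono (measure_ne_top _ _) (measure_mono (hbad n))
    have hto : (P {ω | ¬ ∃ n, m ≤ K n ω}).toReal = 0 :=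
      le_antisymm (ge_of_tendsto hzero (Eventually.of_forall hle)) ENNReal.toReal_nonneg
    have := (ENNReal.toReal_eq_zero_iff _).mp hto
    exact this.resolve_right (measure_ne_top _ _)
  -- Step 3: combine
  filter_upwards [hxi, hKunbdd, hKmono] with ω hω1 hω2 hω3
  have hmono : Monotone fun n => K n ω := monotone_nat_of_le_succ hω3
  rw [tendsto_atTop]
  intro b
  obtain ⟨M, hbM⟩ := exists_nat_ge b
  obtain ⟨i, hi1, hiM⟩ := hω1 M
  obtain ⟨N, hN⟩ := hω2 i
  filter_upwards [eventually_ge_atTop N] with n hn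
  have hiK : i ≤ K n ω := le_trans hN (hmono hn)
  have hne : (Finset.Icc 1 (K n ω)).Nonempty := ⟨i, Finset.mem_Icc.mpr ⟨hi1, hiK⟩⟩
  calc b ≤ (M : ℝ) := hbM
    _ ≤ ξ i ω := le_of_lt hiM
    _ ≤ (Finset.Icc 1 (K n ω)).sup' hne (fun j => ξ j ω) :=
        Finset.le_sup' (fun j => ξ j ω) (Finset.mem_Icc.mpr ⟨hi1, hiK⟩)
    _ = psi ξ K n ω := by rw [psi, dif_pos hne]
end
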